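/- Let G ∈ ℝ^{m×n} and let S ⊆ ℝ^{n×m} be a linear subspace. Define M = {K : det(I - GK) ≠ 0} and h(K) = -K(I - GK)^{-1}. Then S is quadratically invariant with respect to G if and only if h(S ∩ M) = S ∩ M. -/

import Mathlib

open Polynomial Filter Topology Matrix

/-- If `1 - B` has invertible determinant, its inverse is a polynomial in `B`. -/
lemma aux_inv_eq_aeval {m : ℕ} (B : Matrix (Fin m) (Fin m) ℝ)
    (h : IsUnit (1 - B).det) :
    ∃ p : Polynomial ℝ, (1 - B)⁻¹ = Polynomial.aeval B p := by
  set A : Matrix (Fin m) (Fin m) ℝ := 1 - B with hA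
  have hc0 : A.charpoly.coeff 0 ≠ 0 := by
    intro h0
    have hdet := Matrix.det_eq_sign_charpoly_coeff A
    rw [h0, mul_zero] at hdet
    rw [hdet] at h
    simp at h
  set c0 : ℝ := A.charpoly.coeff 0 with hc
  set q : Polynomial ℝ := (-(c0⁻¹)) • A.charpoly.divX with hq
  have hch : Polynomial.aeval A A.charpoly = 0 := Matrix.aeval_self_charpoly A
  have hsplit : Polynomial.X * A.charpoly.divX + Polynomial.C c0 = A.charpoly :=
    Polynomial.X_mul_divX_add A.charpoly
  have h1 : A * Polynomial.aeval A A.charpoly.divX + c0 • (1 : Matrix (Fin m) (Fin m) ℝ) = 0 := by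
    have := congrArg (Polynomial.aeval A) hsplit
    rw [hch] at this
    simpa [Polynomial.aeval_mul, Polynomial.aeval_X, Polynomial.aeval_C,
      Algebra.algebraMap_eq_smul_one] using this
  have h2 : A * Polynomial.aeval A q = 1 := by
    rw [hq, _root_.map_smul]
    have hAd : A * Polynomial.aeval A A.charpoly.divX = -(c0 • 1) := by
      linear_combination (norm := abel) h1
    rw [mul_smul_comm, hAd]
    rw [smul_neg, neg_smul, neg_neg, smul_smul, inv_mul_cancel₀ hc0, one_smul]
  refine ⟨q.comp (1 - Polynomial.X), ?_⟩
  rw [Matrix.inv_eq_right_inv h2]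
  rw [Polynomial.aeval_comp]
  congr 1
  simp
  rw [hA]

/-- Polarization: quadratic invariance gives `K*G*J + J*G*K ∈ S`. -/
lemma aux_polar {m n : ℕ} (G : Matrix (Fin m) (Fin n) ℝ)
    (S : Submodule ℝ (Matrix (Fin n) (Fin m) ℝ))
    (hQI : ∀ K ∈ S, K * G * K ∈ S) {K J : Matrix (Fin n) (Fin m) ℝ}
    (hK : K ∈ S) (hJ : J ∈ S) : K * G * J + J * G * K ∈ S := by
  have h1 : (K + J) * G * (K + J) ∈ S := hQI _ (S.add_mem hK hJ)
  have h2 : K * G * K ∈ S := hQI _ hK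
  have h3 : J * G * J ∈ S := hQI _ hJ
  have expand : (K + J) * G * (K + J) = K * G * K + (K * G * J + J * G * K) + J * G * J := by
    rw [Matrix.add_mul, Matrix.add_mul, Matrix.mul_add, Matrix.mul_add]
    abel
  have h4 := S.sub_mem (S.sub_mem h1 h2) h3
  rw [expand] at h4
  have e : K * G * K + (K * G * J + J * G * K) + J * G * J - K * G * K - J * G * J
      = K * G * J + J * G * K := by abel
  rwa [e] at h4

/-- Quadratic invariance gives membership of all `K * (G*K)^i`. -/
lemma aux_pow_mem {m n : ℕ} (G : Matrix (Fin m) (Fin n) ℝ)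
    (S : Submodule ℝ (Matrix (Fin n) (Fin m) ℝ))
    (hQI : ∀ K ∈ S, K * G * K ∈ S) {K : Matrix (Fin n) (Fin m) ℝ} (hK : K ∈ S) :
    ∀ i : ℕ, K * (G * K) ^ i ∈ S := by
  intro i
  induction i with
  | zero => simpa using hK
  | succ i ih =>
    have hsum : K * G * (K * (G * K) ^ i) + (K * (G * K) ^ i) * G * K ∈ S :=
      aux_polar G S hQI hK ih
    have e1 : K * G * (K * (G * K) ^ i) = K * (G * K) ^ (i + 1) := by
      rw [pow_succ']
      simp [Matrix.mul_assoc]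
    have e2 : (K * (G * K) ^ i) * G * K = K * (G * K) ^ (i + 1) := by
      rw [pow_succ]
      simp [Matrix.mul_assoc]
    rw [e1, e2] at hsum
    have : K * (G * K) ^ (i + 1) = (2 : ℝ)⁻¹ • (K * (G * K) ^ (i + 1) + K * (G * K) ^ (i + 1)) := by
      rw [← two_smul ℝ (K * (G * K) ^ (i + 1)), smul_smul]
      norm_num
    rw [this]
    exact S.smul_mem _ hsum

theorem stmt_14 {m n : ℕ} (G : Matrix (Fin m) (Fin n) ℝ)
    (S : Submodule ℝ (Matrix (Fin n) (Fin m) ℝ)) :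
    (∀ K ∈ S, K * G * K ∈ S) ↔
      (fun K : Matrix (Fin n) (Fin m) ℝ => -(K * (1 - G * K)⁻¹)) ''
          ((S : Set (Matrix (Fin n) (Fin m) ℝ)) ∩ {K | IsUnit (1 - G * K).det}) =
        (S : Set (Matrix (Fin n) (Fin m) ℝ)) ∩ {K | IsUnit (1 - G * K).det} := by
  constructor
  · -- forward direction
    intro hQI
    -- h maps S ∩ M into S ∩ M, and is an involution on M
    have hmaps : ∀ K : Matrix (Fin n) (Fin m) ℝ, K ∈ S → IsUnit (1 - G * K).det →
        (-(K * (1 - G * K)⁻¹) ∈ S ∧ IsUnit (1 - G * -(K * (1 - G * K)⁻¹)).det ∧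
          (1 - G * -(K * (1 - G * K)⁻¹))⁻¹ = 1 - G * K) := by
      intro K hKS hKM
      have fact1 : (1 - G * K) * (1 - G * K)⁻¹ = 1 := Matrix.mul_nonsing_inv _ hKM
      have fact2 : (1 - G * K)⁻¹ * (1 - G * K) = 1 := Matrix.nonsing_inv_mul _ hKM
      have hCdef : 1 - G * -(K * (1 - G * K)⁻¹) = 1 + G * K * (1 - G * K)⁻¹ := by
        rw [Matrix.mul_neg, sub_neg_eq_add, Matrix.mul_assoc]
      have hCA : (1 + G * K * (1 - G * K)⁻¹) * (1 - G * K) = 1 := by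
        rw [Matrix.add_mul, Matrix.one_mul, Matrix.mul_assoc, fact2, Matrix.mul_one]
        abel
      have hcomm : (1 - G * K) * (G * K) = (G * K) * (1 - G * K) := by
        rw [Matrix.sub_mul, Matrix.mul_sub, Matrix.one_mul, Matrix.mul_one]
      have hAC : (1 - G * K) * (1 + G * K * (1 - G * K)⁻¹) = 1 := by
        have hmid : (1 - G * K) * (G * K * (1 - G * K)⁻¹) = G * K := by
          rw [← Matrix.mul_assoc, hcomm, Matrix.mul_assoc, fact1, Matrix.mul_one]
        rw [Matrix.mul_add, Matrix.mul_one, hmid]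
        abel
      refine ⟨?_, ?_, ?_⟩
      · -- membership in S
        obtain ⟨p, hp⟩ := aux_inv_eq_aeval (G * K) hKM
        have hKinv : K * (1 - G * K)⁻¹ ∈ S := by
          rw [hp, Polynomial.aeval_eq_sum_range, Matrix.mul_sum]
          refine S.sum_mem fun i _ => ?_
          rw [Matrix.mul_smul]
          exact S.smul_mem _ (aux_pow_mem G S hQI hKS i)
        exact S.neg_mem hKinv
      · -- membership in M
        rw [hCdef]
        have hdet : (1 + G * K * (1 - G * K)⁻¹).det * (1 - G * K).det = 1 := by
          rw [← Matrix.det_mul, hCA, Matrix.det_one]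
        exact IsUnit.of_mul_eq_one _ hdet
      · -- the inverse formula
        rw [hCdef]
        exact Matrix.inv_eq_right_inv hCA
    apply Set.Subset.antisymm
    · rintro _ ⟨K, ⟨hKS, hKM⟩, rfl⟩
      obtain ⟨h1, h2, _⟩ := hmaps K hKS hKM
      exact ⟨h1, h2⟩
    · rintro K ⟨hKS, hKM⟩
      obtain ⟨h1, h2, h3⟩ := hmaps K hKS hKM
      refine ⟨-(K * (1 - G * K)⁻¹), ⟨h1, h2⟩, ?_⟩
      -- involution: h (h K) = K
      simp only
      rw [h3]
      have fact2 : (1 - G * K)⁻¹ * (1 - G * K) = 1 := Matrix.nonsing_inv_mul _ hKM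
      rw [Matrix.neg_mul, neg_neg, Matrix.mul_assoc, fact2, Matrix.mul_one]
  · -- backward direction
    intro himg K hKS
    set B : Matrix (Fin m) (Fin m) ℝ := G * K with hB
    set F : ℝ → Matrix (Fin n) (Fin m) ℝ := fun t => K * B * (1 - t • B)⁻¹ with hF
    have hdcont : Continuous fun t : ℝ => (1 - t • B).det :=
      Continuous.matrix_det (continuous_const.sub (continuous_id.smul continuous_const))
    have hev : ∀ᶠ t in 𝓝[≠] (0 : ℝ), F t ∈ S := by
      have h1 : ∀ᶠ t in 𝓝 (0 : ℝ), (1 - t • B).det ≠ 0 :=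
        hdcont.continuousAt.eventually_ne (by simp)
      filter_upwards [eventually_nhdsWithin_of_eventually_nhds h1, self_mem_nhdsWithin]
        with t hdet ht0
      have ht0' : t ≠ 0 := ht0
      have hunit : IsUnit (1 - t • B).det := isUnit_iff_ne_zero.mpr hdet
      have htKS : t • K ∈ S := S.smul_mem t hKS
      have hGtK : G * (t • K) = t • B := by rw [Matrix.mul_smul, hB]
      have htKM : IsUnit (1 - G * (t • K)).det := by rw [hGtK]; exact hunit
      have himgmem : -((t • K) * (1 - G * (t • K))⁻¹) ∈
          (S : Set (Matrix (Fin n) (Fin m) ℝ)) ∩ {K | IsUnit (1 - G * K).det} := by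
        rw [← himg]
        exact Set.mem_image_of_mem _ ⟨htKS, htKM⟩
      have huS : -((t • K) * (1 - t • B)⁻¹) ∈ S := by
        have := himgmem.1
        rwa [hGtK] at this
      have hsS : K * (1 - t • B)⁻¹ ∈ S := by
        have h2 : (-(t⁻¹)) • (-((t • K) * (1 - t • B)⁻¹)) = K * (1 - t • B)⁻¹ := by
          rw [neg_smul_neg, Matrix.smul_mul, smul_smul, inv_mul_cancel₀ ht0', one_smul]
        rw [← h2]
        exact S.smul_mem _ huS
      have hid : K * (1 - t • B)⁻¹ - K = t • F t := by
        have e1 : (K - K * (1 - t • B)) * (1 - t • B)⁻¹ = K * (1 - t • B)⁻¹ - K := by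
          rw [Matrix.sub_mul, Matrix.mul_assoc, Matrix.mul_nonsing_inv _ hunit, Matrix.mul_one]
        have e2 : K - K * (1 - t • B) = t • (K * B) := by
          rw [Matrix.mul_sub, Matrix.mul_one, Matrix.mul_smul]
          abel
        rw [← e1, e2, Matrix.smul_mul]
      have hFt : F t = t⁻¹ • (K * (1 - t • B)⁻¹ - K) := by
        rw [hid, smul_smul, inv_mul_cancel₀ ht0', one_smul]
      rw [hFt]
      exact S.smul_mem _ (S.sub_mem hsS hKS)
    have haff : ContinuousAt (fun t : ℝ => 1 - t • B) 0 :=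
      (continuous_const.sub (continuous_id.smul continuous_const)).continuousAt
    have hiv : ContinuousAt Inv.inv ((fun t : ℝ => 1 - t • B) 0) := by
      simp only [zero_smul, sub_zero]
      refine continuousAt_matrix_inv 1 ?_
      rw [Matrix.det_one, Ring.inverse_eq_inv']
      exact continuousAt_inv₀ one_ne_zero
    have hinvc : ContinuousAt (fun t : ℝ => (1 - t • B)⁻¹) 0 :=
      ContinuousAt.comp (x := (0 : ℝ)) (f := fun t : ℝ => 1 - t • B) (g := Inv.inv) hiv haff
    have hL : Continuous fun X : Matrix (Fin m) (Fin m) ℝ => K * B * X :=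
      continuous_const.matrix_mul continuous_id
    have hFc : ContinuousAt F 0 := by
      have := hL.continuousAt.comp hinvc
      exact this
    have htend : Tendsto F (𝓝[≠] (0 : ℝ)) (𝓝 (F 0)) :=
      (hFc.tendsto).mono_left nhdsWithin_le_nhds
    have hclosed : IsClosed (S : Set (Matrix (Fin n) (Fin m) ℝ)) :=
      S.closed_of_finiteDimensional
    have hmem : F 0 ∈ S := hclosed.mem_of_tendsto htend hev
    have hF0 : F 0 = K * G * K := by
      rw [hF]
      simp [hB, Matrix.mul_assoc]
    rwa [hF0] at hmem
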